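/- Let B, c, M > 0. Let ζ : ℝ^d → ℝ^q be continuously differentiable with g = ∇ζ (transpose Jacobian) satisfying ‖g(x)‖ ≤ B for all x. Fix x ∈ ℝ^d and assume that for every z ∈ ℝ^d the matrix G_z(x) is invertible with ‖G_z(x)^{-1}‖ ≤ (1 + |z|)/c. Then there exist h₀ > 0 and C > 0 depending only on B, c, M such that: for every h ∈ (0, h₀], every Y_{1/2}, Y_1 ∈ ℝ^d and z_{1/2}, z_1 ∈ ℝ^q with |Y_{1/2}|, |Y_1| ≤ M and |z_{1/2}|, |z_1| ≤ M, and every X₁ ∈ ℝ^d, λ ∈ ℝ^q satisfying X₁ = x + √h Y_{1/2} + h Y_1 + g(x) λ and ζ(X₁) = ζ(x) + √h z_{1/2} + h z_1, one has |X₁ − x| ≤ C √h and |λ| ≤ C √h. -/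

import Mathlib

open Matrix intervalIntegral
open scoped Matrix.Norms.L2Operator

set_option maxHeartbeats 1000000

theorem fderiv_eq_mulVec' (d q : ℕ) (ζ : EuclideanSpace ℝ (Fin d) → EuclideanSpace ℝ (Fin q))
    (g : EuclideanSpace ℝ (Fin d) → Matrix (Fin d) (Fin q) ℝ)
    (hg : ∀ x i j, g x i j = fderiv ℝ ζ x (EuclideanSpace.single i 1) j)
    (y : EuclideanSpace ℝ (Fin d)) (v : EuclideanSpace ℝ (Fin d)) :
    fderiv ℝ ζ y v = Matrix.toEuclideanLin (g y)ᵀ v := by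
  have : (fderiv ℝ ζ y : EuclideanSpace ℝ (Fin d) →ₗ[ℝ] EuclideanSpace ℝ (Fin q))
      = (Matrix.toEuclideanLin (g y)ᵀ : _ →ₗ[ℝ] _) := by
    apply Module.Basis.ext (EuclideanSpace.basisFun (Fin d) ℝ).toBasis
    intro i
    ext j
    simp only [OrthonormalBasis.coe_toBasis, EuclideanSpace.basisFun_apply,
      ContinuousLinearMap.coe_coe]
    rw [← hg]
    have h1 : Matrix.toEuclideanLin (g y)ᵀ (EuclideanSpace.single i 1) j
        = ((g y)ᵀ *ᵥ Pi.single i (1:ℝ)) j := rfl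
    rw [h1, Matrix.mulVec_single]
    simp [Matrix.transpose_apply]
  exact DFunLike.congr_fun this v

noncomputable def mulVecCLM (d q : ℕ) (z : EuclideanSpace ℝ (Fin d)) :
    Matrix (Fin d) (Fin q) ℝ →L[ℝ] EuclideanSpace ℝ (Fin q) :=
  LinearMap.toContinuousLinearMap
    { toFun := fun A => Matrix.toEuclideanLin Aᵀ z
      map_add' := by intro A B; simp [Matrix.transpose_add]
      map_smul' := by intro r A; simp [Matrix.transpose_smul] }

theorem ftc_step (d q : ℕ) (ζ : EuclideanSpace ℝ (Fin d) → EuclideanSpace ℝ (Fin q))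
    (g : EuclideanSpace ℝ (Fin d) → Matrix (Fin d) (Fin q) ℝ)
    (hζ : ContDiff ℝ 1 ζ)
    (hg : ∀ x i j, g x i j = fderiv ℝ ζ x (EuclideanSpace.single i 1) j)
    (x z : EuclideanSpace ℝ (Fin d)) :
    ζ (x + z) - ζ x
      = Matrix.toEuclideanLin (∫ τ in (0:ℝ)..1, g (x + τ • z))ᵀ z := by
  have hgc : Continuous g := by
    have hfd := hζ.continuous_fderiv one_ne_zero
    have : g = fun y => Matrix.of fun i j =>
        (EuclideanSpace.proj j) (fderiv ℝ ζ y (EuclideanSpace.single i 1)) := by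
      funext y i j; exact hg y i j
    rw [this]
    exact continuous_pi fun i => continuous_pi fun j =>
      (EuclideanSpace.proj j).continuous.comp
        (((ContinuousLinearMap.apply ℝ (EuclideanSpace ℝ (Fin q))
          (EuclideanSpace.single i 1)).continuous).comp hfd)
  have hpc : Continuous fun τ : ℝ => x + τ • z :=
    continuous_const.add (continuous_id.smul continuous_const)
  have hint : IntervalIntegrable (fun τ : ℝ => g (x + τ • z)) MeasureTheory.volume 0 1 :=
    (hgc.comp hpc).intervalIntegrable 0 1
  have hderiv : ∀ τ ∈ Set.uIcc (0:ℝ) 1,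
      HasDerivAt (fun τ : ℝ => ζ (x + τ • z))
        ((mulVecCLM d q z) (g (x + τ • z))) τ := by
    intro τ _
    have hp : HasDerivAt (fun τ : ℝ => x + τ • z) z τ := by
      simpa using ((hasDerivAt_id τ).smul_const z).const_add x
    have := ((hζ.differentiable one_ne_zero (x + τ • z)).hasFDerivAt.comp_hasDerivAt τ hp)
    have he : fderiv ℝ ζ (x + τ • z) z = (mulVecCLM d q z) (g (x + τ • z)) := by
      rw [fderiv_eq_mulVec' d q ζ g hg]; rfl
    rw [← he]
    exact this
  have hintF : IntervalIntegrable
      (fun τ : ℝ => (mulVecCLM d q z) (g (x + τ • z))) MeasureTheory.volume 0 1 :=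
    (((mulVecCLM d q z).continuous).comp (hgc.comp hpc)).intervalIntegrable 0 1
  have hFTC := intervalIntegral.integral_eq_sub_of_hasDerivAt hderiv hintF
  have hcomm := (mulVecCLM d q z).intervalIntegral_comp_comm hint (μ := MeasureTheory.volume)
      (a := 0) (b := 1)
  simp only [hcomm] at hFTC
  simp only [one_smul, zero_smul, add_zero] at hFTC
  rw [← hFTC]
  rfl

theorem toEuc_norm_le (m n : ℕ) (A : Matrix (Fin m) (Fin n) ℝ) (v : EuclideanSpace ℝ (Fin n)) :
    ‖Matrix.toEuclideanLin A v‖ ≤ ‖A‖ * ‖v‖ := A.l2_opNorm_mulVec v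

theorem norm_transpose_eq (m n : ℕ) (A : Matrix (Fin m) (Fin n) ℝ) : ‖Aᵀ‖ = ‖A‖ := by
  rw [← Matrix.conjTranspose_eq_transpose_of_trivial]
  exact A.l2_opNorm_conjTranspose

theorem toEuc_mul (l m n : ℕ) (A : Matrix (Fin l) (Fin m) ℝ) (Bm : Matrix (Fin m) (Fin n) ℝ)
    (v : EuclideanSpace ℝ (Fin n)) :
    Matrix.toEuclideanLin (A*Bm) v = Matrix.toEuclideanLin A (Matrix.toEuclideanLin Bm v) := by
  simp only [Matrix.toEuclideanLin_apply]
  simp [Matrix.mulVec_mulVec]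

/-- Let `B, c, M > 0`. Let `ζ : ℝ^d → ℝ^q` be `C¹` with
`g = ∇ζ` (transpose Jacobian) satisfying `‖g(x)‖ ≤ B` for all `x`. Fix `x` and assume that
for every `z` the matrix `G_z(x) = (∫₀¹ g(x + τ z) dτ)ᵀ g(x)` is invertible with
`‖G_z(x)⁻¹‖ ≤ (1 + |z|)/c`. Then there exist `h₀ > 0` and `C > 0` depending only on
`B, c, M` such that: for every `h ∈ (0, h₀]`, all data `Y_{1/2}, Y₁, z_{1/2}, z₁` bounded
by `M`, and every `X₁, λ` satisfying `X₁ = x + √h Y_{1/2} + h Y₁ + g(x) λ` and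
`ζ(X₁) = ζ(x) + √h z_{1/2} + h z₁`, one has `|X₁ − x| ≤ C √h` and `|λ| ≤ C √h`. -/
theorem one_step_lagrange_bound (d q : ℕ) (B c M : ℝ) (hB : 0 < B) (hc : 0 < c)
    (hM : 0 < M) :
    ∃ h₀ > (0:ℝ), ∃ C > (0:ℝ),
      ∀ (ζ : EuclideanSpace ℝ (Fin d) → EuclideanSpace ℝ (Fin q))
        (g : EuclideanSpace ℝ (Fin d) → Matrix (Fin d) (Fin q) ℝ),
        ContDiff ℝ 1 ζ →
        (∀ x i j, g x i j = fderiv ℝ ζ x (EuclideanSpace.single i 1) j) →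
        (∀ x, ‖g x‖ ≤ B) →
        ∀ x : EuclideanSpace ℝ (Fin d),
        (∀ z : EuclideanSpace ℝ (Fin d),
          IsUnit ((∫ τ in (0:ℝ)..1, g (x + τ • z))ᵀ * g x)) →
        (∀ z : EuclideanSpace ℝ (Fin d),
          ‖(((∫ τ in (0:ℝ)..1, g (x + τ • z))ᵀ * g x)⁻¹ : Matrix (Fin q) (Fin q) ℝ)‖
            ≤ (1 + ‖z‖) / c) →
        ∀ h : ℝ, 0 < h → h ≤ h₀ →
        ∀ (Y₁₂ Y₁ : EuclideanSpace ℝ (Fin d)) (z₁₂ z₁ : EuclideanSpace ℝ (Fin q)),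
          ‖Y₁₂‖ ≤ M → ‖Y₁‖ ≤ M → ‖z₁₂‖ ≤ M → ‖z₁‖ ≤ M →
        ∀ (X₁ : EuclideanSpace ℝ (Fin d)) (lam : EuclideanSpace ℝ (Fin q)),
          X₁ = x + Real.sqrt h • Y₁₂ + h • Y₁ + Matrix.toEuclideanLin (g x) lam →
          ζ X₁ = ζ x + Real.sqrt h • z₁₂ + h • z₁ →
          ‖X₁ - x‖ ≤ C * Real.sqrt h ∧ ‖lam‖ ≤ C * Real.sqrt h := by
  set K : ℝ := 2 * M * (1 + B) with hK
  have hKpos : 0 < K := by positivity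
  set Cl : ℝ := 2 * (1 + 2 * M) * K / c with hCl
  have hClpos : 0 < Cl := by positivity
  refine ⟨min 1 ((c / (2 * B * K)) ^ 2), by positivity, Cl + 2 * M + B * Cl, by positivity,
    ?_⟩
  intro ζ g hζ hg hgB x hGunit hGinv h hh hh0 Y₁₂ Y₁ z₁₂ z₁ hY₁₂ hY₁ hz₁₂ hz₁ X₁ lam hX hζeq
  set s : ℝ := Real.sqrt h with hs
  have hs0 : 0 < s := Real.sqrt_pos.mpr hh
  have hss : s * s = h := Real.mul_self_sqrt hh.le
  have hs1 : s ≤ 1 := by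
    have : h ≤ 1 := le_trans hh0 (min_le_left _ _)
    nlinarith
  have hhs : h ≤ s := by nlinarith
  have hsc : s ≤ c / (2 * B * K) := by
    have h1 : h ≤ (c / (2 * B * K)) ^ 2 := le_trans hh0 (min_le_right _ _)
    have h2 : s ≤ Real.sqrt ((c / (2 * B * K)) ^ 2) := Real.sqrt_le_sqrt h1
    rwa [Real.sqrt_sq (by positivity)] at h2
  set z : EuclideanSpace ℝ (Fin d) := X₁ - x with hzdef
  have hxz : x + z = X₁ := by rw [hzdef]; abel
  set A : Matrix (Fin d) (Fin q) ℝ := ∫ τ in (0:ℝ)..1, g (x + τ • z) with hA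
  set G : Matrix (Fin q) (Fin q) ℝ := Aᵀ * g x with hG
  -- FTC
  have hFTC : ζ X₁ - ζ x = Matrix.toEuclideanLin Aᵀ z := by
    rw [← hxz]; exact ftc_step d q ζ g hζ hg x z
  have hRHS : ζ X₁ - ζ x = s • z₁₂ + h • z₁ := by rw [hζeq]; abel
  -- decomposition of z
  have hzeq : z = s • Y₁₂ + h • Y₁ + Matrix.toEuclideanLin (g x) lam := by
    rw [hzdef, hX]; abel
  -- key identity for G lam
  have hGlam : Matrix.toEuclideanLin G lam
      = s • z₁₂ + h • z₁ - Matrix.toEuclideanLin Aᵀ (s • Y₁₂ + h • Y₁) := by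
    rw [hG, toEuc_mul]
    have h2 : Matrix.toEuclideanLin Aᵀ (s • Y₁₂ + h • Y₁)
          + Matrix.toEuclideanLin Aᵀ (Matrix.toEuclideanLin (g x) lam)
        = Matrix.toEuclideanLin Aᵀ z := by
      rw [← map_add, hzeq]
    rw [← hFTC, hRHS] at h2
    rw [← h2]; abel
  -- norm bounds
  have hAnorm : ‖A‖ ≤ B := by
    have := intervalIntegral.norm_integral_le_of_norm_le_const
      (C := B) (f := fun τ : ℝ => g (x + τ • z)) (a := 0) (b := 1)
      (fun τ _ => hgB _)
    simpa using this
  have hAt : ‖Aᵀ‖ ≤ B := by rw [norm_transpose_eq]; exact hAnorm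
  have hYnorm : ‖s • Y₁₂ + h • Y₁‖ ≤ 2 * M * s := by
    have h1 : ‖s • Y₁₂‖ ≤ s * M := by
      rw [norm_smul, Real.norm_eq_abs, abs_of_pos hs0]
      exact mul_le_mul_of_nonneg_left hY₁₂ hs0.le
    have h2 : ‖h • Y₁‖ ≤ h * M := by
      rw [norm_smul, Real.norm_eq_abs, abs_of_pos hh]
      exact mul_le_mul_of_nonneg_left hY₁ hh.le
    calc ‖s • Y₁₂ + h • Y₁‖ ≤ ‖s • Y₁₂‖ + ‖h • Y₁‖ := norm_add_le _ _
      _ ≤ s * M + h * M := add_le_add h1 h2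
      _ ≤ 2 * M * s := by nlinarith
  have hGlamnorm : ‖Matrix.toEuclideanLin G lam‖ ≤ K * s := by
    rw [hGlam]
    have h1 : ‖s • z₁₂‖ ≤ s * M := by
      rw [norm_smul, Real.norm_eq_abs, abs_of_pos hs0]
      exact mul_le_mul_of_nonneg_left hz₁₂ hs0.le
    have h2 : ‖h • z₁‖ ≤ h * M := by
      rw [norm_smul, Real.norm_eq_abs, abs_of_pos hh]
      exact mul_le_mul_of_nonneg_left hz₁ hh.le
    have h3 : ‖Matrix.toEuclideanLin Aᵀ (s • Y₁₂ + h • Y₁)‖ ≤ B * (2 * M * s) := by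
      calc ‖Matrix.toEuclideanLin Aᵀ (s • Y₁₂ + h • Y₁)‖
          ≤ ‖Aᵀ‖ * ‖s • Y₁₂ + h • Y₁‖ := toEuc_norm_le _ _ _ _
        _ ≤ B * (2 * M * s) := by
            apply mul_le_mul hAt hYnorm (norm_nonneg _) hB.le
    calc ‖s • z₁₂ + h • z₁ - Matrix.toEuclideanLin Aᵀ (s • Y₁₂ + h • Y₁)‖
        ≤ ‖s • z₁₂‖ + ‖h • z₁‖ + ‖Matrix.toEuclideanLin Aᵀ (s • Y₁₂ + h • Y₁)‖ :=
          norm_sub_le _ _ |>.trans (by gcongr; exact norm_add_le _ _)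
      _ ≤ s * M + h * M + B * (2 * M * s) := by gcongr
      _ ≤ K * s := by rw [hK]; nlinarith
  -- recover lam
  have hGdet : IsUnit G.det := (Matrix.isUnit_iff_isUnit_det G).mp (hGunit z)
  have hlamrec : lam = Matrix.toEuclideanLin G⁻¹ (Matrix.toEuclideanLin G lam) := by
    rw [← toEuc_mul, Matrix.nonsing_inv_mul G hGdet]
    simp [Matrix.toEuclideanLin_apply, Matrix.one_mulVec]
  have hlam1 : ‖lam‖ ≤ ((1 + ‖z‖) / c) * (K * s) := by
    calc ‖lam‖ = ‖Matrix.toEuclideanLin G⁻¹ (Matrix.toEuclideanLin G lam)‖ := by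
          rw [← hlamrec]
      _ ≤ ‖G⁻¹‖ * ‖Matrix.toEuclideanLin G lam‖ := toEuc_norm_le _ _ _ _
      _ ≤ ((1 + ‖z‖) / c) * (K * s) := by
          apply mul_le_mul (hGinv z) hGlamnorm (norm_nonneg _) (by positivity)
  have hznorm : ‖z‖ ≤ 2 * M * s + B * ‖lam‖ := by
    rw [hzeq]
    calc ‖s • Y₁₂ + h • Y₁ + Matrix.toEuclideanLin (g x) lam‖
        ≤ ‖s • Y₁₂ + h • Y₁‖ + ‖Matrix.toEuclideanLin (g x) lam‖ := norm_add_le _ _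
      _ ≤ 2 * M * s + B * ‖lam‖ := by
          gcongr
          calc ‖Matrix.toEuclideanLin (g x) lam‖ ≤ ‖g x‖ * ‖lam‖ := toEuc_norm_le _ _ _ _
            _ ≤ B * ‖lam‖ := mul_le_mul_of_nonneg_right (hgB x) (norm_nonneg _)
  -- solve the inequalities
  have hBKs : B * K * s ≤ c / 2 := by
    calc B * K * s ≤ B * K * (c / (2 * B * K)) := by gcongr
      _ = c / 2 := by field_simp
  have hlam2 : ‖lam‖ ≤ Cl * s := by
    have hl := hlam1
    have h1 : ‖lam‖ ≤ (1 + (2 * M * s + B * ‖lam‖)) / c * (K * s) := by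
      apply le_trans hl
      gcongr
    have hln : 0 ≤ ‖lam‖ := norm_nonneg _
    rw [div_mul_eq_mul_div, le_div_iff₀ hc] at h1
    -- ‖lam‖ * c ≤ (1 + 2Ms + B‖lam‖) * (K s)
    rw [hCl]
    rw [div_mul_eq_mul_div, le_div_iff₀ hc]
    nlinarith [h1, mul_le_mul_of_nonneg_left hBKs hln,
      mul_le_mul_of_nonneg_left hs1 (show (0:ℝ) ≤ 2 * M * K * s by positivity)]
  refine ⟨?_, ?_⟩
  · have : ‖X₁ - x‖ = ‖z‖ := by rw [hzdef]
    rw [this]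
    calc ‖z‖ ≤ 2 * M * s + B * ‖lam‖ := hznorm
      _ ≤ 2 * M * s + B * (Cl * s) := by gcongr
      _ ≤ (Cl + 2 * M + B * Cl) * s := by nlinarith [mul_pos hClpos hs0]
  · calc ‖lam‖ ≤ Cl * s := hlam2
      _ ≤ (Cl + 2 * M + B * Cl) * s := by
          have h0 : 0 ≤ (2 * M + B * Cl) * s := by positivity
          nlinarith [h0]
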